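/- Let X be a metric space with at least two points having positive distance, let x₁, …, xₙ ∈ X be distinct points, and define ε = min over pairs i ≠ j of d(x_i, x_j) > 0. Let y₁, …, yₙ ∈ ℝ and define, for x ∉ {x₁,…,xₙ}, f(x) = (Σ_i y_i · (ε / d(x, x_i))) / (Σ_i (ε / d(x, x_i))). Then for each index i₀, the limit of f(x) as x → x_{i₀} (with x ranging over X \ {x₁,…,xₙ}) equals y_{i₀}. -/

import Mathlib

open Filter Topology

/-- The normalized inverse-distance kernel weighted average tends to the
prescribed value at each interpolation point. -/
theorem stmt_1 {X : Type*} [MetricSpace X] {n : ℕ} (hn : 2 ≤ n)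
    (x : Fin n → X) (hx : Function.Injective x)
    (y : Fin n → ℝ)
    (ε : ℝ)
    (hε : ε = ⨅ p : {p : Fin n × Fin n // p.1 ≠ p.2}, dist (x p.1.1) (x p.1.2))
    (f : X → ℝ)
    (hf : ∀ z ∉ Set.range x,
      f z = (∑ i, y i * (ε / dist z (x i))) / (∑ i, ε / dist z (x i)))
    (i₀ : Fin n) :
    Tendsto f (𝓝[(Set.range x)ᶜ] (x i₀)) (𝓝 (y i₀)) := by
  haveI : Nontrivial (Fin n) := Fin.nontrivial_iff_two_le.mpr hn
  obtain ⟨j, hj⟩ := exists_ne i₀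
  haveI : Nonempty {p : Fin n × Fin n // p.1 ≠ p.2} := ⟨⟨(j, i₀), hj⟩⟩
  have hd : ∀ p : {p : Fin n × Fin n // p.1 ≠ p.2}, 0 < dist (x p.1.1) (x p.1.2) := by
    intro p
    exact dist_pos.mpr fun h => p.2 (hx h)
  have εpos : 0 < ε := by
    rw [hε]
    obtain ⟨p₀, hp₀⟩ := Finite.exists_min
      (fun p : {p : Fin n × Fin n // p.1 ≠ p.2} => dist (x p.1.1) (x p.1.2))
    have : (⨅ p : {p : Fin n × Fin n // p.1 ≠ p.2}, dist (x p.1.1) (x p.1.2))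
        = dist (x p₀.1.1) (x p₀.1.2) :=
      le_antisymm (ciInf_le (Finite.bddBelow_range _) p₀) (le_ciInf hp₀)
    rw [this]; exact hd p₀
  set s := (Set.range x)ᶜ with hs
  have hmem : ∀ᶠ z in 𝓝[s] (x i₀), z ∈ s := eventually_mem_nhdsWithin
  have hdz : ∀ z ∈ s, ∀ i, dist z (x i) ≠ 0 := by
    intro z hz i h
    exact hz ⟨i, (dist_eq_zero.mp h).symm⟩
  have hu : ∀ i : Fin n, Tendsto (fun z => dist z (x i₀) / dist z (x i)) (𝓝[s] (x i₀))
      (𝓝 (if i = i₀ then 1 else 0)) := by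
    intro i
    by_cases h : i = i₀
    · subst h
      simp only [if_pos rfl]
      apply tendsto_const_nhds.congr'
      filter_upwards [hmem] with z hz
      simp [div_self (hdz z hz i)]
    · simp only [if_neg h]
      have hid : Tendsto (fun z : X => z) (𝓝[s] (x i₀)) (𝓝 (x i₀)) :=
        tendsto_id.mono_left nhdsWithin_le_nhds
      have h1 : Tendsto (fun z => dist z (x i₀)) (𝓝[s] (x i₀)) (𝓝 0) := by
        simpa using hid.dist (tendsto_const_nhds (x := x i₀))
      have h2 : Tendsto (fun z => dist z (x i)) (𝓝[s] (x i₀)) (𝓝 (dist (x i₀) (x i))) :=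
        hid.dist (tendsto_const_nhds (x := x i))
      have hne : dist (x i₀) (x i) ≠ 0 := by
        rw [dist_ne_zero]
        exact fun e => h (hx e).symm
      have h3 : Tendsto (fun z => dist z (x i₀) / dist z (x i)) (𝓝[s] (x i₀))
          (𝓝 (0 / dist (x i₀) (x i))) := h1.div h2 hne
      simpa using h3
  have hnum : Tendsto (fun z => ∑ i, y i * (dist z (x i₀) / dist z (x i)))
      (𝓝[s] (x i₀)) (𝓝 (y i₀)) := by
    have := tendsto_finset_sum Finset.univ
      (fun i (_ : i ∈ Finset.univ) => (tendsto_const_nhds (x := y i)).mul (hu i))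
    have hval : (∑ i, y i * (if i = i₀ then (1:ℝ) else 0)) = y i₀ := by
      simp [mul_ite]
    rwa [hval] at this
  have hden : Tendsto (fun z => ∑ i, dist z (x i₀) / dist z (x i))
      (𝓝[s] (x i₀)) (𝓝 1) := by
    have := tendsto_finset_sum Finset.univ (fun i (_ : i ∈ Finset.univ) => hu i)
    have hval : (∑ i, (if i = i₀ then (1:ℝ) else 0)) = 1 := by simp
    rwa [hval] at this
  have heq : ∀ᶠ z in 𝓝[s] (x i₀),
      (∑ i, y i * (dist z (x i₀) / dist z (x i))) / (∑ i, dist z (x i₀) / dist z (x i))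
        = f z := by
    filter_upwards [hmem] with z hz
    rw [hf z hz]
    have hd0 := hdz z hz i₀
    have hc : ε / dist z (x i₀) ≠ 0 := div_ne_zero εpos.ne' hd0
    have e1 : (∑ i, y i * (ε / dist z (x i)))
        = (ε / dist z (x i₀)) * ∑ i, y i * (dist z (x i₀) / dist z (x i)) := by
      rw [Finset.mul_sum]
      refine Finset.sum_congr rfl fun i _ => ?_
      have := hdz z hz i
      field_simp
      try ring
    have e2 : (∑ i, ε / dist z (x i))
        = (ε / dist z (x i₀)) * ∑ i, dist z (x i₀) / dist z (x i) := by
      rw [Finset.mul_sum]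
      refine Finset.sum_congr rfl fun i _ => ?_
      have := hdz z hz i
      field_simp
      try ring
    rw [e1, e2, mul_div_mul_left _ _ hc]
  have := (hnum.div hden one_ne_zero).congr' heq
  simpa using this
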